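/- In the interpolating linear regime, suppose 0 < η and η‖x_i‖² ≤ 1 for all i, and suppose the SGD iterates w_i converge to a limit w_∞ belonging to the solution set W := {w ∈ ℝ^m : y_i = x_iᵀw for all i}. Then w_∞ is the element of W closest to the initialization in Euclidean norm: ‖w_∞ − w_0‖ ≤ ‖w − w_0‖ for every w ∈ W. In particular, if w_0 = 0, SGD converges to the minimum-ℓ²-norm interpolating solution. -/
import Mathlib


open scoped RealInnerProductSpace

/-- (implicit regularization of SGD in the interpolating linear regime:
if the iterates converge to an interpolating solution, it is the one closest to the
initialization in Euclidean norm; in particular, from `w₀ = 0` SGD converges to the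
minimum-ℓ²-norm interpolating solution). -/
theorem stmt_6 {m : ℕ} (x : ℕ → EuclideanSpace ℝ (Fin m)) (y : ℕ → ℝ)
    (W : Set (EuclideanSpace ℝ (Fin m)))
    (hWdef : W = {u : EuclideanSpace ℝ (Fin m) | ∀ i : ℕ, y (i + 1) = ⟪x (i + 1), u⟫})
    (η : ℝ) (hη : 0 < η)
    (hstep : ∀ i : ℕ, η * ‖x (i + 1)‖ ^ 2 ≤ 1)
    (w₀ : EuclideanSpace ℝ (Fin m))
    (w : ℕ → EuclideanSpace ℝ (Fin m)) (hw0 : w 0 = w₀)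
    (hupd : ∀ i : ℕ,
      w (i + 1) = w i + (η * (y (i + 1) - ⟪x (i + 1), w i⟫)) • x (i + 1))
    (winf : EuclideanSpace ℝ (Fin m))
    (hconv : Filter.Tendsto w Filter.atTop (nhds winf))
    (hmem : winf ∈ W) :
    (∀ w' ∈ W, ‖winf - w₀‖ ≤ ‖w' - w₀‖) ∧
    (w₀ = 0 → ∀ w' ∈ W, ‖winf‖ ≤ ‖w'‖) := by
  subst hWdef
  have key : ∀ w' ∈ {u : EuclideanSpace ℝ (Fin m) | ∀ i : ℕ, y (i + 1) = ⟪x (i + 1), u⟫},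
      ‖winf - w₀‖ ≤ ‖w' - w₀‖ := by
    intro w' hw'
    -- orthogonality along the trajectory
    have horth : ∀ n, ⟪w n - w₀, w' - winf⟫ = 0 := by
      intro n
      induction n with
      | zero => simp [hw0]
      | succ n ih =>
        have hx : ⟪x (n + 1), w' - winf⟫ = 0 := by
          rw [inner_sub_right, ← hw' n, ← hmem n, sub_self]
        rw [hupd n]
        have : w n + (η * (y (n + 1) - ⟪x (n + 1), w n⟫)) • x (n + 1) - w₀
            = (w n - w₀) + (η * (y (n + 1) - ⟪x (n + 1), w n⟫)) • x (n + 1) := by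
          abel
        rw [this, inner_add_left, ih, real_inner_smul_left, hx]
        ring
    -- pass to the limit
    have hlim : Filter.Tendsto (fun n => ⟪w n - w₀, w' - winf⟫) Filter.atTop
        (nhds ⟪winf - w₀, w' - winf⟫) := by
      exact Filter.Tendsto.inner (hconv.sub tendsto_const_nhds) tendsto_const_nhds
    have horth' : ⟪winf - w₀, w' - winf⟫ = 0 := by
      have h2 : Filter.Tendsto (fun n => ⟪w n - w₀, w' - winf⟫) Filter.atTop
          (nhds (0 : ℝ)) := by
        simp only [horth]; exact tendsto_const_nhds
      exact tendsto_nhds_unique hlim h2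
    -- Pythagoras
    have hdecomp : w' - w₀ = (winf - w₀) + (w' - winf) := by abel
    have : ‖w' - w₀‖ ^ 2 = ‖winf - w₀‖ ^ 2 + ‖w' - winf‖ ^ 2 := by
      rw [hdecomp, norm_add_sq_real, horth']
      ring
    nlinarith [norm_nonneg (w' - w₀), norm_nonneg (winf - w₀), sq_nonneg ‖w' - winf‖]
  refine ⟨key, fun h0 w' hw' => ?_⟩
  have := key w' hw'
  simpa [h0] using this
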